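/- Let X have the two-sided density f(x) = K·exp(-(x-Δ_d)/p) for x > Δ_d and f(x) = K·exp((x-Δ_d)/q) for x < Δ_d, where p = Δ_d γ_u σ_{us}², q = γ_d σ_{ds}², K = 1/(p+q). Then for any r > 0, E[exp(-X/r)·1{X > 0}] = K·[ (exp(-Δ_d/q) - exp(-Δ_d/r)) / (1/r - 1/q) + exp(-Δ_d/r)/(1/r + 1/p) ] whenever r ≠ q. -/

import Mathlib

open MeasureTheory Real

lemma aux_int_exp_mul (a b c : ℝ) (hc : c ≠ 0) :
    ∫ x in a..b, Real.exp (c * x) = (Real.exp (c * b) - Real.exp (c * a)) / c := by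
  have h : ∀ x ∈ Set.uIcc a b,
      HasDerivAt (fun y => Real.exp (c * y) / c) (Real.exp (c * x)) x := by
    intro x _
    have h1 : HasDerivAt (fun y : ℝ => c * y) c x := by
      simpa using (hasDerivAt_id x).const_mul c
    have h2 := ((Real.hasDerivAt_exp (c * x)).comp x h1).div_const c
    simpa [mul_div_assoc, mul_div_cancel_right₀ _ hc] using h2
  rw [intervalIntegral.integral_eq_sub_of_hasDerivAt h
    ((Real.continuous_exp.comp (continuous_const.mul continuous_id)).intervalIntegrable a b)]
  ring

lemma aux_int_exp_neg_mul_Ioi (a c : ℝ) (hc : 0 < c) :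
    ∫ x in Set.Ioi a, Real.exp (-(c * x)) = Real.exp (-(c * a)) / c := by
  rw [MeasureTheory.integral_comp_mul_left_Ioi (fun y => Real.exp (-y)) a hc,
    integral_exp_neg_Ioi, smul_eq_mul]
  rw [inv_mul_eq_div]

/-- Key integral of equation (12): `E[exp(-X/r)·1{X > 0}]` for `X` with the two-sided
exponential density of Appendix C, `p = Δd γu σus²`, `q = γd σds²`, `K = 1/(p+q)`. -/
theorem stmt_11 (Δd γu γd σus σds p q K r : ℝ)
    (hΔd : 0 < Δd) (hγu : 0 < γu) (hγd : 0 < γd) (hσus : 0 < σus) (hσds : 0 < σds)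
    (hp : p = Δd * γu * σus) (hq : q = γd * σds) (hK : K = 1 / (p + q))
    (hr : 0 < r) (hrq : r ≠ q) :
    (∫ x : ℝ,
        (if 0 < x then Real.exp (-x / r) else 0) *
          (if x < Δd then K * Real.exp ((x - Δd) / q)
           else K * Real.exp (-(x - Δd) / p)))
      = K * ((Real.exp (-Δd / q) - Real.exp (-Δd / r)) / (1 / r - 1 / q)
          + Real.exp (-Δd / r) / (1 / r + 1 / p)) := by
  have hp0 : 0 < p := by rw [hp]; positivity
  have hq0 : 0 < q := by rw [hq]; positivity
  set f : ℝ → ℝ := fun x =>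
      (if 0 < x then Real.exp (-x / r) else 0) *
        (if x < Δd then K * Real.exp ((x - Δd) / q)
         else K * Real.exp (-(x - Δd) / p)) with hf
  set c₁ : ℝ := 1 / q - 1 / r with hc₁
  set c₂ : ℝ := 1 / r + 1 / p with hc₂
  have hc₁0 : c₁ ≠ 0 := by
    rw [hc₁, sub_ne_zero]
    exact fun h => hrq (by field_simp at h; linarith)
  have hc₂0 : 0 < c₂ := by rw [hc₂]; positivity
  -- functions on the two pieces
  have heq1 : ∀ x ∈ Set.Ioo (0:ℝ) Δd,
      f x = K * Real.exp (-Δd / q) * Real.exp (c₁ * x) := by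
    intro x hx
    rw [hf]
    simp only [if_pos hx.1, if_pos hx.2]
    rw [mul_left_comm, ← Real.exp_add, mul_assoc, ← Real.exp_add]
    congr 2
    rw [hc₁]
    field_simp
    ring
  have heq2 : ∀ x ∈ Set.Ici Δd,
      f x = K * Real.exp (Δd / p) * Real.exp (-(c₂ * x)) := by
    intro x hx
    have hx0 : 0 < x := lt_of_lt_of_le hΔd hx
    rw [hf]
    simp only [if_pos hx0, if_neg (not_lt.mpr (Set.mem_Ici.mp hx))]
    rw [mul_left_comm, ← Real.exp_add, mul_assoc, ← Real.exp_add]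
    congr 2
    rw [hc₂]
    field_simp
    ring
  have hint1 : IntegrableOn f (Set.Ioo 0 Δd) := by
    refine (IntegrableOn.congr_fun ?_ (fun x hx => (heq1 x hx).symm) measurableSet_Ioo)
    have hcont : Continuous fun x : ℝ => K * Real.exp (-Δd / q) * Real.exp (c₁ * x) := by
      continuity
    exact hcont.integrableOn_Icc.mono_set Set.Ioo_subset_Icc_self
  have hint2 : IntegrableOn f (Set.Ici Δd) := by
    refine (IntegrableOn.congr_fun ?_ (fun x hx => (heq2 x hx).symm) measurableSet_Ici)
    rw [integrableOn_Ici_iff_integrableOn_Ioi]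
    have h := (exp_neg_integrableOn_Ioi Δd hc₂0).const_mul (K * Real.exp (Δd / p))
    simpa [neg_mul, mul_comm, IntegrableOn] using h
  have hsupp : ∀ x, x ∉ Set.Ioi (0:ℝ) → f x = 0 := by
    intro x hx
    simp only [Set.mem_Ioi, not_lt] at hx
    simp [hf, if_neg (not_lt.mpr hx)]
  calc (∫ x : ℝ, f x) = ∫ x in Set.Ioi (0:ℝ), f x :=
        (setIntegral_eq_integral_of_forall_compl_eq_zero hsupp).symm
    _ = ∫ x in Set.Ioo 0 Δd ∪ Set.Ici Δd, f x := by rw [Set.Ioo_union_Ici_eq_Ioi hΔd]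
    _ = (∫ x in Set.Ioo 0 Δd, f x) + ∫ x in Set.Ici Δd, f x := by
        refine setIntegral_union ?_ measurableSet_Ici hint1 hint2
        exact Set.disjoint_left.mpr (fun x hx hx' => absurd hx.2 (not_lt.mpr hx'))
    _ = K * ((Real.exp (-Δd / q) - Real.exp (-Δd / r)) / (1 / r - 1 / q)
          + Real.exp (-Δd / r) / (1 / r + 1 / p)) := by
        rw [setIntegral_congr_fun measurableSet_Ioo heq1,
          setIntegral_congr_fun measurableSet_Ici heq2,
          integral_Ici_eq_integral_Ioi]
        rw [integral_const_mul, integral_const_mul, aux_int_exp_neg_mul_Ioi Δd c₂ hc₂0]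
        have : (∫ x in Set.Ioo (0:ℝ) Δd, Real.exp (c₁ * x))
            = (Real.exp (c₁ * Δd) - Real.exp (c₁ * 0)) / c₁ := by
          rw [← MeasureTheory.integral_Ioc_eq_integral_Ioo,
            ← intervalIntegral.integral_of_le hΔd.le, aux_int_exp_mul _ _ _ hc₁0]
        rw [this]
        have e1 : Real.exp (-Δd / q) * Real.exp (c₁ * Δd) = Real.exp (-Δd / r) := by
          rw [← Real.exp_add]; congr 1; rw [hc₁]; field_simp; ring
        have e2 : Real.exp (Δd / p) * Real.exp (-(c₂ * Δd)) = Real.exp (-Δd / r) := by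
          rw [← Real.exp_add]; congr 1; rw [hc₂]; field_simp; ring
        have t2 : K * Real.exp (Δd / p) * (Real.exp (-(c₂ * Δd)) / c₂)
            = K * (Real.exp (-Δd / r) / c₂) := by
          rw [mul_assoc, ← mul_div_assoc, e2]
        have t1 : K * Real.exp (-Δd / q) * ((Real.exp (c₁ * Δd) - Real.exp (c₁ * 0)) / c₁)
            = K * (-((Real.exp (-Δd / q) - Real.exp (-Δd / r)) / c₁)) := by
          rw [mul_zero, Real.exp_zero, mul_assoc, ← mul_div_assoc]
          congr 1
          rw [← neg_div]
          congr 1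
          rw [mul_sub, e1, mul_one]
          ring
        rw [t1, t2, ← mul_add,
          show (1 / r - 1 / q : ℝ) = -c₁ by rw [hc₁]; ring,
          show (1 / r + 1 / p : ℝ) = c₂ from hc₂.symm, div_neg]
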